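/- Let G be a finitely generated perfect group and n ≥ 0 a fixed integer. Then for every group H and every surjective group homomorphism p : H → G whose kernel N satisfies N ≤ Z_n(H), the subgroup γ_{n+1}(H) is finitely generated. -/

import Mathlib

open Subgroup
open scoped commutatorElement

private lemma aux_top_ucs_le {H : Type*} [Group H] (m : ℕ) :
    ⁅(⊤ : Subgroup H), Subgroup.upperCentralSeries H m⁆ ≤ Subgroup.upperCentralSeries H (m - 1) := by
  cases m with
  | zero =>
    rw [Subgroup.upperCentralSeries_zero, Subgroup.commutator_bot_right]
  | succ j =>
    rw [Subgroup.commutator_le]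
    intro a _ b hb
    have h := (Subgroup.mem_upperCentralSeries_succ_iff).mp hb a
    have h' : ⁅b, a⁆ ∈ Subgroup.upperCentralSeries H j := h
    have : ⁅a, b⁆ ∈ Subgroup.upperCentralSeries H j := by
      rw [← commutatorElement_inv]
      exact (Subgroup.upperCentralSeries H j).inv_mem h'
    simpa using this

private lemma aux_three_subgroups_le {H : Type*} [Group H] (A B C D : Subgroup H) [D.Normal]
    (h1 : ⁅⁅B, C⁆, A⁆ ≤ D) (h2 : ⁅⁅C, A⁆, B⁆ ≤ D) : ⁅⁅A, B⁆, C⁆ ≤ D := by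
  have key : ∀ X Y Z : Subgroup H, (⁅⁅X, Y⁆, Z⁆ ≤ D ↔
      ⁅⁅X.map (QuotientGroup.mk' D), Y.map (QuotientGroup.mk' D)⁆,
        Z.map (QuotientGroup.mk' D)⁆ = ⊥) := by
    intro X Y Z
    rw [← Subgroup.map_commutator, ← Subgroup.map_commutator, Subgroup.map_eq_bot_iff,
      QuotientGroup.ker_mk']
  rw [key] at h1 h2 ⊢
  exact Subgroup.commutator_commutator_eq_bot_of_rotate h1 h2

private lemma aux_lcs_ucs_le {H : Type*} [Group H] (i : ℕ) : ∀ m : ℕ,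
    ⁅(⊤ : Subgroup H).lowerCentralSeries i, Subgroup.upperCentralSeries H m⁆ ≤ Subgroup.upperCentralSeries H (m - (i + 1)) := by
  induction i with
  | zero => intro m; simpa using aux_top_ucs_le (H := H) m
  | succ i ih =>
    intro m
    show ⁅⁅(⊤ : Subgroup H).lowerCentralSeries i, ⊤⁆, Subgroup.upperCentralSeries H m⁆ ≤ _
    apply aux_three_subgroups_le
    · calc ⁅⁅(⊤ : Subgroup H), Subgroup.upperCentralSeries H m⁆, (⊤ : Subgroup H).lowerCentralSeries i⁆
          ≤ ⁅Subgroup.upperCentralSeries H (m - 1), (⊤ : Subgroup H).lowerCentralSeries i⁆ :=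
            Subgroup.commutator_mono (aux_top_ucs_le m) le_rfl
        _ = ⁅(⊤ : Subgroup H).lowerCentralSeries i, Subgroup.upperCentralSeries H (m - 1)⁆ :=
            Subgroup.commutator_comm _ _
        _ ≤ Subgroup.upperCentralSeries H ((m - 1) - (i + 1)) := ih _
        _ ≤ Subgroup.upperCentralSeries H (m - (i + 1 + 1)) := by
            have : (m - 1) - (i + 1) = m - (i + 1 + 1) := by omega
            rw [this]
    · calc ⁅⁅Subgroup.upperCentralSeries H m, (⊤ : Subgroup H).lowerCentralSeries i⁆, (⊤ : Subgroup H)⁆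
          = ⁅⁅(⊤ : Subgroup H).lowerCentralSeries i, Subgroup.upperCentralSeries H m⁆, (⊤ : Subgroup H)⁆ := by
            rw [Subgroup.commutator_comm (Subgroup.upperCentralSeries H m)]
        _ ≤ ⁅Subgroup.upperCentralSeries H (m - (i + 1)), (⊤ : Subgroup H)⁆ :=
            Subgroup.commutator_mono (ih m) le_rfl
        _ = ⁅(⊤ : Subgroup H), Subgroup.upperCentralSeries H (m - (i + 1))⁆ :=
            Subgroup.commutator_comm _ _
        _ ≤ Subgroup.upperCentralSeries H ((m - (i + 1)) - 1) := aux_top_ucs_le _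
        _ ≤ Subgroup.upperCentralSeries H (m - (i + 1 + 1)) := by
            have : (m - (i + 1)) - 1 = m - (i + 1 + 1) := by omega
            rw [this]

private lemma aux_map_lcs_eq {H G : Type*} [Group H] [Group G] (p : H →* G)
    (hp : Function.Surjective p) (k : ℕ) :
    ((⊤ : Subgroup H).lowerCentralSeries k).map p = (⊤ : Subgroup G).lowerCentralSeries k := by
  induction k with
  | zero =>
    simpa using Subgroup.map_top_of_surjective p hp
  | succ k ih =>
    show Subgroup.map p ⁅_, ⊤⁆ = ⁅_, ⊤⁆
    rw [Subgroup.map_commutator, ih, Subgroup.map_top_of_surjective p hp]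

private lemma aux_lcs_perfect {G : Type*} [Group G] (h : commutator G = ⊤) (k : ℕ) :
    (⊤ : Subgroup G).lowerCentralSeries k = ⊤ := by
  induction k with
  | zero => rfl
  | succ k ih =>
    show ⁅(⊤ : Subgroup G).lowerCentralSeries k, ⊤⁆ = ⊤
    rw [ih, ← commutator_def, h]

/-- If `G` is a finitely generated perfect group, then for every surjective homomorphism
`p : H → G` whose kernel is contained in the `n`-th term of the upper central series of
`H`, the subgroup `γ_{n+1}(H) = (⊤ : Subgroup H).lowerCentralSeries n` is finitely generated. -/
theorem fg_lowerCentralSeries_of_fg_perfect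
    {G : Type*} [Group G] (hFG : Group.FG G) (hperf : commutator G = ⊤) (n : ℕ)
    {H : Type*} [Group H] (p : H →* G) (hp : Function.Surjective p)
    (hker : p.ker ≤ _root_.upperCentralSeries H n) :
    Group.FG ((⊤ : Subgroup H).lowerCentralSeries n) := by
  set K := (⊤ : Subgroup H).lowerCentralSeries n with hK
  set N := p.ker with hN
  -- K maps onto G
  have hmapK : K.map p = ⊤ := by
    rw [hK, aux_map_lcs_eq p hp, aux_lcs_perfect hperf]
  -- elements of K commute with elements of N
  have hKcomm : K ≤ Subgroup.centralizer (Subgroup.upperCentralSeries H n : Set H) := by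
    rw [← Subgroup.commutator_eq_bot_iff_le_centralizer, eq_bot_iff]
    have h := aux_lcs_ucs_le (H := H) n n
    rwa [Nat.sub_eq_zero_of_le (Nat.le_succ n), Subgroup.upperCentralSeries_zero] at h
  have hcomm : ∀ x ∈ K, ∀ y ∈ N, Commute x y := by
    intro x hx y hy
    exact (Subgroup.mem_centralizer_iff.mp (hKcomm hx) y (hker hy)).symm
  -- choose lifts of a finite generating set of G inside K
  obtain ⟨S, hSclosure, hSfin⟩ := Group.fg_iff.mp hFG
  have hex : ∀ g : G, ∃ x : H, x ∈ K ∧ p x = g := by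
    intro g
    have : g ∈ K.map p := hmapK ▸ Subgroup.mem_top g
    obtain ⟨x, hx, hpx⟩ := this
    exact ⟨x, hx, hpx⟩
  choose σ hσK hσp using hex
  set T := Subgroup.closure (σ '' S) with hT
  have hTK : T ≤ K := by
    rw [hT, Subgroup.closure_le]
    rintro x ⟨g, _, rfl⟩
    exact hσK g
  have hpT : T.map p = ⊤ := by
    rw [hT, MonoidHom.map_closure]
    have himg : p '' (σ '' S) = S := by
      rw [Set.image_image]
      have : (fun g => p (σ g)) = id := funext fun g => hσp g
      rw [this, Set.image_id]
    rw [himg, hSclosure]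
  -- the multiplication map T × N → H
  have hcomm' : ∀ (t : ↥T) (x : ↥N), Commute (T.subtype t) (N.subtype x) :=
    fun t x => hcomm _ (hTK t.2) _ x.2
  set φ : ↥T × ↥N →* H := (T.subtype).noncommCoprod N.subtype hcomm' with hφ
  have hφ_apply : ∀ q : ↥T × ↥N, φ q = (q.1 : H) * (q.2 : H) := fun q => rfl
  have hφsur : Function.Surjective φ := by
    intro h
    have : p h ∈ T.map p := by rw [hpT]; exact Subgroup.mem_top _
    obtain ⟨t, ht, hpt⟩ := this
    have hmem : t⁻¹ * h ∈ N := by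
      rw [hN, MonoidHom.mem_ker, map_mul, map_inv, hpt]
      group
    refine ⟨(⟨t, ht⟩, ⟨t⁻¹ * h, hmem⟩), ?_⟩
    rw [hφ_apply]
    show t * (t⁻¹ * h) = h
    group
  -- the lower central series of N (as a group) vanishes at stage n
  have hNn : ∀ i : ℕ, ((⊤ : Subgroup ↥N).lowerCentralSeries i).map N.subtype ≤ Subgroup.upperCentralSeries H (n - i) := by
    intro i
    induction i with
    | zero =>
      show (⊤ : Subgroup ↥N).map N.subtype ≤ _
      rw [← MonoidHom.range_eq_map, Subgroup.range_subtype]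
      simpa using (show N ≤ Subgroup.upperCentralSeries H n from hker)
    | succ i ih =>
      show Subgroup.map N.subtype ⁅(⊤ : Subgroup ↥N).lowerCentralSeries i, ⊤⁆ ≤ _
      rw [Subgroup.map_commutator]
      calc ⁅((⊤ : Subgroup ↥N).lowerCentralSeries i).map N.subtype, (⊤ : Subgroup ↥N).map N.subtype⁆
          ≤ ⁅Subgroup.upperCentralSeries H (n - i), (⊤ : Subgroup H)⁆ :=
            Subgroup.commutator_mono ih le_top
        _ = ⁅(⊤ : Subgroup H), Subgroup.upperCentralSeries H (n - i)⁆ := Subgroup.commutator_comm _ _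
        _ ≤ Subgroup.upperCentralSeries H ((n - i) - 1) := aux_top_ucs_le _
        _ ≤ Subgroup.upperCentralSeries H (n - (i + 1)) := by
            have : (n - i) - 1 = n - (i + 1) := by omega
            rw [this]
  have hNbot : (⊤ : Subgroup ↥N).lowerCentralSeries n = ⊥ := by
    have h := hNn n
    rw [Nat.sub_self, Subgroup.upperCentralSeries_zero, ← eq_bot_iff, Subgroup.map_eq_bot_iff,
      Subgroup.ker_subtype, le_bot_iff] at h
    exact h
  -- conclude K = T
  have hmain : K ≤ T := by
    have h1 : K = ((⊤ : Subgroup (↥T × ↥N)).lowerCentralSeries n).map φ := (aux_map_lcs_eq φ hφsur n).symm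
    have h2 : (⊤ : Subgroup (↥T × ↥N)).lowerCentralSeries n =
        ((⊤ : Subgroup ↥T).lowerCentralSeries n).prod ((⊤ : Subgroup ↥N).lowerCentralSeries n) := Subgroup.top_lowerCentralSeries_prod n
    rw [h1, h2, hNbot]
    rintro x ⟨⟨a, b⟩, hab, rfl⟩
    obtain ⟨ha, hb⟩ := Subgroup.mem_prod.mp hab
    have hb1 : b = 1 := by simpa using hb
    rw [hφ_apply]
    show ((a : H) * (b : H)) ∈ T
    rw [hb1]
    set_option linter.unnecessarySimpa false in simpa using a.2
  have hKT : K = T := le_antisymm hmain hTK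
  have hfg : K.FG := by
    rw [hKT, hT]
    exact (Subgroup.fg_iff T).mpr ⟨σ '' S, rfl, hSfin.image σ⟩
  exact (Group.fg_iff_subgroup_fg K).mpr hfg
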